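/- Matrix Callebaut inequality (extreme bounds): for positive definite matrices A_1,...,A_m, B_1,...,B_m and any t ∈ [0,1], one has 2·(∑_j A_j♯B_j) ⊗ (∑_j A_j♯B_j) ≤ ∑_j (A_j ♯_t B_j) ⊗ ∑_j (A_j ♯_(1-t) B_j) + ∑_j (A_j ♯_(1-t) B_j) ⊗ ∑_j (A_j ♯_t B_j) ≤ ∑_j A_j ⊗ ∑_j B_j + ∑_j B_j ⊗ ∑_j A_j in the Loewner order. -/

import Mathlib

open Matrix Finset
open scoped ComplexOrder

/-- Real power of a matrix via the spectral decomposition (junk value if not Hermitian). -/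
noncomputable def mrpow {l : Type*} [Fintype l] [DecidableEq l] (A : Matrix l l ℂ) (r : ℝ) :
    Matrix l l ℂ :=
  if hA : A.IsHermitian then
    (hA.eigenvectorUnitary : Matrix l l ℂ) *
      Matrix.diagonal (fun i => ((hA.eigenvalues i ^ r : ℝ) : ℂ)) *
      (star hA.eigenvectorUnitary : Matrix l l ℂ)
  else A

/-- Weighted matrix geometric mean `A ♯ₜ B = A^(1/2) (A^(-1/2) B A^(-1/2))^t A^(1/2)`. -/
noncomputable def wgmean {l : Type*} [Fintype l] [DecidableEq l] (A B : Matrix l l ℂ) (t : ℝ) :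
    Matrix l l ℂ :=
  mrpow A (1/2) * mrpow (mrpow A (-(1/2)) * B * mrpow A (-(1/2))) t * mrpow A (1/2)

/-- Loewner order: `A ≤ B` iff `B - A` is positive semidefinite. -/
def loewnerLE {l : Type*} [Fintype l] [DecidableEq l] (A B : Matrix l l ℂ) : Prop :=
  (B - A).PosSemidef

section Aux

variable {l : Type*} [Fintype l] [DecidableEq l]

lemma mrpow_def {A : Matrix l l ℂ} (hA : A.IsHermitian) (r : ℝ) :
    mrpow A r = (hA.eigenvectorUnitary : Matrix l l ℂ) *
      Matrix.diagonal (fun i => ((hA.eigenvalues i ^ r : ℝ) : ℂ)) *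
      (star hA.eigenvectorUnitary : Matrix l l ℂ) :=
  dif_pos hA

lemma mrpow_isHermitian {A : Matrix l l ℂ} (hA : A.IsHermitian) (r : ℝ) :
    (mrpow A r).IsHermitian := by
  rw [mrpow_def hA r]
  have hd : (Matrix.diagonal (fun i => ((hA.eigenvalues i ^ r : ℝ) : ℂ))).IsHermitian := by
    apply Matrix.isHermitian_diagonal_of_self_adjoint
    funext i
    exact Complex.conj_ofReal _
  have := Matrix.isHermitian_mul_mul_conjTranspose
    (hA.eigenvectorUnitary : Matrix l l ℂ) hd
  rwa [← Matrix.star_eq_conjTranspose, mul_assoc, ← mul_assoc] at this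

lemma mrpow_mul_mrpow {A : Matrix l l ℂ} (hA : A.PosDef) (r s : ℝ) :
    mrpow A r * mrpow A s = mrpow A (r + s) := by
  have h1 : (star hA.1.eigenvectorUnitary : Matrix l l ℂ) *
      (hA.1.eigenvectorUnitary : Matrix l l ℂ) = 1 := Unitary.coe_star_mul_self _
  have h2 : ∀ X : Matrix l l ℂ, (star hA.1.eigenvectorUnitary : Matrix l l ℂ) *
      ((hA.1.eigenvectorUnitary : Matrix l l ℂ) * X) = X := fun X => by
    rw [← mul_assoc, h1, one_mul]
  rw [mrpow_def hA.1, mrpow_def hA.1, mrpow_def hA.1]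
  simp only [mul_assoc, h2]
  congr 1
  rw [← mul_assoc, Matrix.diagonal_mul_diagonal]
  have h3 : ∀ i, ((hA.1.eigenvalues i ^ r : ℝ) : ℂ) * ((hA.1.eigenvalues i ^ s : ℝ) : ℂ)
      = ((hA.1.eigenvalues i ^ (r + s) : ℝ) : ℂ) := fun i => by
    rw [← Complex.ofReal_mul, ← Real.rpow_add (hA.eigenvalues_pos i)]
  simp only [h3, mul_assoc]

lemma mrpow_zero {A : Matrix l l ℂ} (hA : A.IsHermitian) : mrpow A 0 = 1 := by
  rw [mrpow_def hA]
  simp only [Real.rpow_zero, Complex.ofReal_one]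
  rw [Matrix.diagonal_one, mul_one]
  exact Unitary.coe_mul_star_self _

lemma mrpow_one {A : Matrix l l ℂ} (hA : A.IsHermitian) : mrpow A 1 = A := by
  rw [mrpow_def hA]
  simp only [Real.rpow_one]
  exact hA.spectral_theorem.symm

lemma posDef_conj {B M : Matrix l l ℂ} (hB : B.PosDef) (hM : IsUnit M) :
    (Mᴴ * B * M).PosDef := by
  refine Matrix.PosDef.of_dotProduct_mulVec_pos (Matrix.isHermitian_conjTranspose_mul_mul M hB.1) fun x hx => ?_
  have hMx : M *ᵥ x ≠ 0 := by
    intro h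
    exact hx (Matrix.mulVec_injective_iff_isUnit.mpr hM (h.trans (Matrix.mulVec_zero M).symm))
  simpa only [star_mulVec, dotProduct_mulVec, vecMul_vecMul] using hB.dotProduct_mulVec_pos hMx

lemma isUnit_mrpow_neg_half {A : Matrix l l ℂ} (hA : A.PosDef) :
    IsUnit (mrpow A (-(1/2))) := by
  have e0 : (-(1/2 : ℝ)) + 1/2 = 0 := by norm_num
  have e0' : (1/2 : ℝ) + -(1/2) = 0 := by norm_num
  have h1 : mrpow A (-(1/2)) * mrpow A (1/2) = 1 := by
    rw [mrpow_mul_mrpow hA, e0, mrpow_zero hA.1]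
  have h2 : mrpow A (1/2) * mrpow A (-(1/2)) = 1 := by
    rw [mrpow_mul_mrpow hA, e0', mrpow_zero hA.1]
  exact ⟨⟨mrpow A (-(1/2)), mrpow A (1/2), h1, h2⟩, rfl⟩

lemma inner_posDef {A B : Matrix l l ℂ} (hA : A.PosDef) (hB : B.PosDef) :
    (mrpow A (-(1/2)) * B * mrpow A (-(1/2))).PosDef := by
  have hH := mrpow_isHermitian hA.1 (-(1/2))
  have := posDef_conj hB (isUnit_mrpow_neg_half hA)
  rwa [hH.eq] at this

open Kronecker

lemma kron_conjTranspose (X : Matrix l l ℂ) (Y : Matrix l l ℂ) :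
    (X ⊗ₖ Y)ᴴ = Xᴴ ⊗ₖ Yᴴ := by
  ext p q
  simp [Matrix.conjTranspose_apply, Matrix.kroneckerMap_apply, mul_comm]

lemma mrpow_kron_rep {Z W : Matrix l l ℂ} (hZ : Z.PosDef) (hW : W.PosDef) (a b : ℝ) :
    mrpow Z a ⊗ₖ mrpow W b =
      ((hZ.1.eigenvectorUnitary : Matrix l l ℂ) ⊗ₖ (hW.1.eigenvectorUnitary : Matrix l l ℂ)) *
        Matrix.diagonal
          (fun p : l × l => ((hZ.1.eigenvalues p.1 ^ a * hW.1.eigenvalues p.2 ^ b : ℝ) : ℂ)) *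
        ((hZ.1.eigenvectorUnitary : Matrix l l ℂ) ⊗ₖ
          (hW.1.eigenvectorUnitary : Matrix l l ℂ))ᴴ := by
  rw [mrpow_def hZ.1 a, mrpow_def hW.1 b, Matrix.mul_kronecker_mul, Matrix.mul_kronecker_mul,
    Matrix.diagonal_kronecker_diagonal, kron_conjTranspose]
  congr 1
  congr 1
  funext p
  push_cast
  try ring

lemma psd_conj_diag (M : Matrix (l × l) (l × l) ℂ) {f : l × l → ℝ} (hf : ∀ p, 0 ≤ f p) :
    (M * Matrix.diagonal (fun p => ((f p : ℝ) : ℂ)) * Mᴴ).PosSemidef := by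
  refine Matrix.PosSemidef.mul_mul_conjTranspose_same ?_ M
  refine Matrix.PosSemidef.diagonal ?_
  intro p
  simp only [Pi.zero_apply]
  exact_mod_cast hf p

lemma scalar_low {z w : ℝ} (hz : 0 < z) (hw : 0 < w) {t : ℝ} (ht0 : 0 ≤ t) (ht1 : t ≤ 1) :
    0 ≤ z ^ t * w ^ (1 - t) + z ^ (1 - t) * w ^ t -
      (z ^ (1/2 : ℝ) * w ^ (1/2 : ℝ) + z ^ (1/2 : ℝ) * w ^ (1/2 : ℝ)) := by
  have hself : ∀ x : ℝ, 0 < x → x ^ t * x ^ (1 - t) = x := fun x hx => by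
    rw [← Real.rpow_add hx]; norm_num
  have hsq : ∀ x : ℝ, 0 < x → x ^ (1/2 : ℝ) * x ^ (1/2 : ℝ) = x := fun x hx => by
    rw [← Real.rpow_add hx]; norm_num
  set a := z ^ t * w ^ (1 - t) with ha'
  set b := z ^ (1 - t) * w ^ t with hb'
  set s := z ^ (1/2 : ℝ) * w ^ (1/2 : ℝ) with hs'
  have ha : 0 < a := mul_pos (Real.rpow_pos_of_pos hz t) (Real.rpow_pos_of_pos hw _)
  have hb : 0 < b := mul_pos (Real.rpow_pos_of_pos hz _) (Real.rpow_pos_of_pos hw t)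
  have hs : 0 < s := mul_pos (Real.rpow_pos_of_pos hz _) (Real.rpow_pos_of_pos hw _)
  have hab : a * b = s * s := by
    rw [ha', hb', hs']
    have h1 := hself z hz
    have h2 := hself w hw
    have h3 := hsq z hz
    have h4 := hsq w hw
    nlinarith [h1, h2, h3, h4]
  nlinarith [sq_nonneg (a - b), hab, ha, hb, hs]

lemma scalar_high {z w : ℝ} (hz : 0 < z) (hw : 0 < w) {t : ℝ} (ht0 : 0 ≤ t) (ht1 : t ≤ 1) :
    0 ≤ z ^ (0 : ℝ) * w ^ (1 : ℝ) + z ^ (1 : ℝ) * w ^ (0 : ℝ) -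
      (z ^ t * w ^ (1 - t) + z ^ (1 - t) * w ^ t) := by
  simp only [Real.rpow_zero, Real.rpow_one, one_mul, mul_one]
  have h1t : (0 : ℝ) ≤ 1 - t := by linarith
  have key : 0 ≤ (z ^ t - w ^ t) * (z ^ (1 - t) - w ^ (1 - t)) := by
    rcases le_total z w with h | h
    · have e1 : z ^ t ≤ w ^ t := Real.rpow_le_rpow hz.le h ht0
      have e2 : z ^ (1 - t) ≤ w ^ (1 - t) := Real.rpow_le_rpow hz.le h h1t
      nlinarith [mul_nonneg (by linarith : (0:ℝ) ≤ w ^ t - z ^ t)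
          (by linarith : (0:ℝ) ≤ w ^ (1 - t) - z ^ (1 - t))]
    · have e1 : w ^ t ≤ z ^ t := Real.rpow_le_rpow hw.le h ht0
      have e2 : w ^ (1 - t) ≤ z ^ (1 - t) := Real.rpow_le_rpow hw.le h h1t
      exact mul_nonneg (by linarith) (by linarith)
  have hzz : z ^ t * z ^ (1 - t) = z := by rw [← Real.rpow_add hz]; norm_num
  have hww : w ^ t * w ^ (1 - t) = w := by rw [← Real.rpow_add hw]; norm_num
  nlinarith [key, hzz, hww]

lemma pair_bounds (A B C D : Matrix l l ℂ) (hA : A.PosDef) (hB : B.PosDef) (hC : C.PosDef)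
    (hD : D.PosDef) (t : ℝ) (ht0 : 0 ≤ t) (ht1 : t ≤ 1) :
    loewnerLE (2 • (wgmean A B (1/2) ⊗ₖ wgmean C D (1/2)))
      (wgmean A B t ⊗ₖ wgmean C D (1 - t) + wgmean A B (1 - t) ⊗ₖ wgmean C D t) ∧
    loewnerLE (wgmean A B t ⊗ₖ wgmean C D (1 - t) + wgmean A B (1 - t) ⊗ₖ wgmean C D t)
      (A ⊗ₖ D + B ⊗ₖ C) := by
  have hZ : (mrpow A (-(1/2)) * B * mrpow A (-(1/2))).PosDef := inner_posDef hA hB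
  have hW : (mrpow C (-(1/2)) * D * mrpow C (-(1/2))).PosDef := inner_posDef hC hD
  set Z := mrpow A (-(1/2)) * B * mrpow A (-(1/2)) with hZdef
  set W := mrpow C (-(1/2)) * D * mrpow C (-(1/2)) with hWdef
  set R := mrpow A (1/2) ⊗ₖ mrpow C (1/2) with hRdef
  have hR : Rᴴ = R := by
    rw [hRdef, kron_conjTranspose, (mrpow_isHermitian hA.1 _).eq, (mrpow_isHermitian hC.1 _).eq]
  set M := ((hZ.1.eigenvectorUnitary : Matrix l l ℂ) ⊗ₖ (hW.1.eigenvectorUnitary : Matrix l l ℂ))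
    with hMdef
  set z := hZ.1.eigenvalues with hzdef
  set w := hW.1.eigenvalues with hwdef
  have key : ∀ a b : ℝ, wgmean A B a ⊗ₖ wgmean C D b =
      R * (M * Matrix.diagonal (fun p : l × l => ((z p.1 ^ a * w p.2 ^ b : ℝ) : ℂ)) * Mᴴ) * Rᴴ := by
    intro a b
    rw [hR, hRdef, ← mrpow_kron_rep hZ hW a b]
    rw [wgmean, wgmean, ← hZdef, ← hWdef, ← Matrix.mul_kronecker_mul, ← Matrix.mul_kronecker_mul]
  have e1 : (1/2 : ℝ) + 1/2 = 1 := by norm_num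
  have e2 : (1/2 : ℝ) + -(1/2) = 0 := by norm_num
  have e3 : (-(1/2 : ℝ)) + 1/2 = 0 := by norm_num
  have hhalf : mrpow A (1/2) * mrpow A (1/2) = A := by
    rw [mrpow_mul_mrpow hA, e1, mrpow_one hA.1]
  have hhalfC : mrpow C (1/2) * mrpow C (1/2) = C := by
    rw [mrpow_mul_mrpow hC, e1, mrpow_one hC.1]
  have hcancelA : mrpow A (1/2) * mrpow A (-(1/2)) = 1 := by
    rw [mrpow_mul_mrpow hA, e2, mrpow_zero hA.1]
  have hcancelA' : mrpow A (-(1/2)) * mrpow A (1/2) = 1 := by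
    rw [mrpow_mul_mrpow hA, e3, mrpow_zero hA.1]
  have hcancelC : mrpow C (1/2) * mrpow C (-(1/2)) = 1 := by
    rw [mrpow_mul_mrpow hC, e2, mrpow_zero hC.1]
  have hcancelC' : mrpow C (-(1/2)) * mrpow C (1/2) = 1 := by
    rw [mrpow_mul_mrpow hC, e3, mrpow_zero hC.1]
  have hB' : mrpow A (1/2) * Z * mrpow A (1/2) = B := by
    rw [hZdef]
    calc mrpow A (1/2) * (mrpow A (-(1/2)) * B * mrpow A (-(1/2))) * mrpow A (1/2)
        = (mrpow A (1/2) * mrpow A (-(1/2))) * B * (mrpow A (-(1/2)) * mrpow A (1/2)) := by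
          simp only [mul_assoc]
      _ = B := by rw [hcancelA, hcancelA', one_mul, mul_one]
  have hD' : mrpow C (1/2) * W * mrpow C (1/2) = D := by
    rw [hWdef]
    calc mrpow C (1/2) * (mrpow C (-(1/2)) * D * mrpow C (-(1/2))) * mrpow C (1/2)
        = (mrpow C (1/2) * mrpow C (-(1/2))) * D * (mrpow C (-(1/2)) * mrpow C (1/2)) := by
          simp only [mul_assoc]
      _ = D := by rw [hcancelC, hcancelC', one_mul, mul_one]
  have hAD : A ⊗ₖ D =
      R * (M * Matrix.diagonal (fun p : l × l => ((z p.1 ^ (0:ℝ) * w p.2 ^ (1:ℝ) : ℝ) : ℂ)) * Mᴴ)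
        * Rᴴ := by
    rw [hR, hRdef, ← mrpow_kron_rep hZ hW 0 1, mrpow_zero hZ.1, mrpow_one hW.1,
      ← Matrix.mul_kronecker_mul, ← Matrix.mul_kronecker_mul, mul_one, hhalf, hD']
  have hBC : B ⊗ₖ C =
      R * (M * Matrix.diagonal (fun p : l × l => ((z p.1 ^ (1:ℝ) * w p.2 ^ (0:ℝ) : ℝ) : ℂ)) * Mᴴ)
        * Rᴴ := by
    rw [hR, hRdef, ← mrpow_kron_rep hZ hW 1 0, mrpow_one hZ.1, mrpow_zero hW.1,
      ← Matrix.mul_kronecker_mul, ← Matrix.mul_kronecker_mul, mul_one, hB', hhalfC]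
  have hzpos : ∀ i, 0 < z i := fun i => hZ.eigenvalues_pos i
  have hwpos : ∀ i, 0 < w i := fun i => hW.eigenvalues_pos i
  constructor
  · rw [loewnerLE]
    have heq : wgmean A B t ⊗ₖ wgmean C D (1 - t) + wgmean A B (1 - t) ⊗ₖ wgmean C D t -
        2 • (wgmean A B (1/2) ⊗ₖ wgmean C D (1/2)) =
        R * (M * Matrix.diagonal (fun p : l × l =>
          ((z p.1 ^ t * w p.2 ^ (1 - t) + z p.1 ^ (1 - t) * w p.2 ^ t -
            (z p.1 ^ (1/2:ℝ) * w p.2 ^ (1/2:ℝ) + z p.1 ^ (1/2:ℝ) * w p.2 ^ (1/2:ℝ)) : ℝ) : ℂ)) *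
          Mᴴ) * Rᴴ := by
      rw [key t (1 - t), key (1 - t) t, key (1/2) (1/2), two_nsmul]
      have hdiag : (Matrix.diagonal (fun p : l × l =>
          ((z p.1 ^ t * w p.2 ^ (1 - t) + z p.1 ^ (1 - t) * w p.2 ^ t -
            (z p.1 ^ (1/2:ℝ) * w p.2 ^ (1/2:ℝ) + z p.1 ^ (1/2:ℝ) * w p.2 ^ (1/2:ℝ)) : ℝ) : ℂ)))
          = Matrix.diagonal (fun p : l × l => ((z p.1 ^ t * w p.2 ^ (1 - t) : ℝ) : ℂ))
            + Matrix.diagonal (fun p : l × l => ((z p.1 ^ (1 - t) * w p.2 ^ t : ℝ) : ℂ))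
            - (Matrix.diagonal (fun p : l × l => ((z p.1 ^ (1/2:ℝ) * w p.2 ^ (1/2:ℝ) : ℝ) : ℂ))
              + Matrix.diagonal (fun p : l × l => ((z p.1 ^ (1/2:ℝ) * w p.2 ^ (1/2:ℝ) : ℝ) : ℂ))) := by
        rw [Matrix.diagonal_add, Matrix.diagonal_add, Matrix.diagonal_sub]
        congr 1
        funext p
        push_cast
        ring
      rw [hdiag]
      simp only [Matrix.mul_add, Matrix.add_mul, Matrix.mul_sub, Matrix.sub_mul]
    rw [heq]
    have inner : (M * Matrix.diagonal (fun p : l × l =>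
        ((z p.1 ^ t * w p.2 ^ (1 - t) + z p.1 ^ (1 - t) * w p.2 ^ t -
          (z p.1 ^ (1/2:ℝ) * w p.2 ^ (1/2:ℝ) + z p.1 ^ (1/2:ℝ) * w p.2 ^ (1/2:ℝ)) : ℝ) : ℂ)) *
        Mᴴ).PosSemidef :=
      psd_conj_diag M fun p => scalar_low (hzpos p.1) (hwpos p.2) ht0 ht1
    exact inner.mul_mul_conjTranspose_same R
  · rw [loewnerLE]
    have heq : A ⊗ₖ D + B ⊗ₖ C -
        (wgmean A B t ⊗ₖ wgmean C D (1 - t) + wgmean A B (1 - t) ⊗ₖ wgmean C D t) =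
        R * (M * Matrix.diagonal (fun p : l × l =>
          ((z p.1 ^ (0:ℝ) * w p.2 ^ (1:ℝ) + z p.1 ^ (1:ℝ) * w p.2 ^ (0:ℝ) -
            (z p.1 ^ t * w p.2 ^ (1 - t) + z p.1 ^ (1 - t) * w p.2 ^ t) : ℝ) : ℂ)) *
          Mᴴ) * Rᴴ := by
      rw [key t (1 - t), key (1 - t) t, hAD, hBC]
      have hdiag : (Matrix.diagonal (fun p : l × l =>
          ((z p.1 ^ (0:ℝ) * w p.2 ^ (1:ℝ) + z p.1 ^ (1:ℝ) * w p.2 ^ (0:ℝ) -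
            (z p.1 ^ t * w p.2 ^ (1 - t) + z p.1 ^ (1 - t) * w p.2 ^ t) : ℝ) : ℂ)))
          = Matrix.diagonal (fun p : l × l => ((z p.1 ^ (0:ℝ) * w p.2 ^ (1:ℝ) : ℝ) : ℂ))
            + Matrix.diagonal (fun p : l × l => ((z p.1 ^ (1:ℝ) * w p.2 ^ (0:ℝ) : ℝ) : ℂ))
            - (Matrix.diagonal (fun p : l × l => ((z p.1 ^ t * w p.2 ^ (1 - t) : ℝ) : ℂ))
              + Matrix.diagonal (fun p : l × l => ((z p.1 ^ (1 - t) * w p.2 ^ t : ℝ) : ℂ))) := by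
        rw [Matrix.diagonal_add, Matrix.diagonal_add, Matrix.diagonal_sub]
        congr 1
        funext p
        push_cast
        ring
      rw [hdiag]
      simp only [Matrix.mul_add, Matrix.add_mul, Matrix.mul_sub, Matrix.sub_mul]
    rw [heq]
    have inner : (M * Matrix.diagonal (fun p : l × l =>
        ((z p.1 ^ (0:ℝ) * w p.2 ^ (1:ℝ) + z p.1 ^ (1:ℝ) * w p.2 ^ (0:ℝ) -
          (z p.1 ^ t * w p.2 ^ (1 - t) + z p.1 ^ (1 - t) * w p.2 ^ t) : ℝ) : ℂ)) *
        Mᴴ).PosSemidef :=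
      psd_conj_diag M fun p => scalar_high (hzpos p.1) (hwpos p.2) ht0 ht1
    exact inner.mul_mul_conjTranspose_same R

lemma sum_kron {m : ℕ} (f g : Fin m → Matrix l l ℂ) :
    (∑ j, f j) ⊗ₖ (∑ k, g k) = ∑ j, ∑ k, f j ⊗ₖ g k := by
  ext p q
  simp [Matrix.kroneckerMap_apply, Matrix.sum_apply, Finset.sum_mul_sum]

lemma psd_sum {ι : Type*} (s : Finset ι) (f : ι → Matrix (l × l) (l × l) ℂ)
    (h : ∀ i ∈ s, (f i).PosSemidef) : (∑ i ∈ s, f i).PosSemidef :=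
  Finset.sum_induction f _ (fun _ _ ha hb => ha.add hb) Matrix.PosSemidef.zero h

end Aux

open Kronecker in
theorem callebaut_tensor_extreme {l : Type*} [Fintype l] [DecidableEq l] (m : ℕ)
    (A B : Fin m → Matrix l l ℂ) (hA : ∀ j, (A j).PosDef) (hB : ∀ j, (B j).PosDef)
    (t : ℝ) (ht0 : 0 ≤ t) (ht1 : t ≤ 1) :
    loewnerLE
      (2 • ((∑ j, wgmean (A j) (B j) (1/2)) ⊗ₖ (∑ j, wgmean (A j) (B j) (1/2))))
      ((∑ j, wgmean (A j) (B j) t) ⊗ₖ (∑ j, wgmean (A j) (B j) (1 - t)) +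
        (∑ j, wgmean (A j) (B j) (1 - t)) ⊗ₖ (∑ j, wgmean (A j) (B j) t)) ∧
    loewnerLE
      ((∑ j, wgmean (A j) (B j) t) ⊗ₖ (∑ j, wgmean (A j) (B j) (1 - t)) +
        (∑ j, wgmean (A j) (B j) (1 - t)) ⊗ₖ (∑ j, wgmean (A j) (B j) t))
      ((∑ j, A j) ⊗ₖ (∑ j, B j) + (∑ j, B j) ⊗ₖ (∑ j, A j)) := by
  have pairs := fun j k : Fin m =>
    pair_bounds (A j) (B j) (A k) (B k) (hA j) (hB j) (hA k) (hB k) t ht0 ht1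
  constructor
  · rw [loewnerLE]
    have heq : (∑ j, wgmean (A j) (B j) t) ⊗ₖ (∑ j, wgmean (A j) (B j) (1 - t)) +
        (∑ j, wgmean (A j) (B j) (1 - t)) ⊗ₖ (∑ j, wgmean (A j) (B j) t) -
        2 • ((∑ j, wgmean (A j) (B j) (1/2)) ⊗ₖ (∑ j, wgmean (A j) (B j) (1/2))) =
        ∑ j, ∑ k, (wgmean (A j) (B j) t ⊗ₖ wgmean (A k) (B k) (1 - t) +
          wgmean (A j) (B j) (1 - t) ⊗ₖ wgmean (A k) (B k) t -
          2 • (wgmean (A j) (B j) (1/2) ⊗ₖ wgmean (A k) (B k) (1/2))) := by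
      rw [sum_kron, sum_kron, sum_kron]
      simp only [Finset.smul_sum, ← Finset.sum_add_distrib, ← Finset.sum_sub_distrib]
    rw [heq]
    exact psd_sum _ _ fun j _ => psd_sum _ _ fun k _ => (pairs j k).1
  · rw [loewnerLE]
    have heq : (∑ j, A j) ⊗ₖ (∑ j, B j) + (∑ j, B j) ⊗ₖ (∑ j, A j) -
        ((∑ j, wgmean (A j) (B j) t) ⊗ₖ (∑ j, wgmean (A j) (B j) (1 - t)) +
          (∑ j, wgmean (A j) (B j) (1 - t)) ⊗ₖ (∑ j, wgmean (A j) (B j) t)) =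
        ∑ j, ∑ k, (A j ⊗ₖ B k + B j ⊗ₖ A k -
          (wgmean (A j) (B j) t ⊗ₖ wgmean (A k) (B k) (1 - t) +
            wgmean (A j) (B j) (1 - t) ⊗ₖ wgmean (A k) (B k) t)) := by
      rw [sum_kron, sum_kron, sum_kron, sum_kron]
      simp only [← Finset.sum_add_distrib, ← Finset.sum_sub_distrib]
    rw [heq]
    exact psd_sum _ _ fun j _ => psd_sum _ _ fun k _ => (pairs j k).2
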